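/- Every finite tree has a monochromatic fixed point of the majority process, and it has a non-monochromatic fixed point of the majority process if and only if it has at least two inner (non-leaf) nodes. -/

import Mathlib

open SimpleGraph Finset
open scoped Classical

variable {V : Type*}

/-- Number of neighbors of `v` with the same color as `v`. -/
noncomputable def sameCount (G : SimpleGraph V) [Fintype V] (c : V → Bool) (v : V) : ℕ :=
  ((G.neighborFinset v).filter fun u => c u = c v).card

/-- Number of neighbors of `v` with the opposite color. -/
noncomputable def diffCount (G : SimpleGraph V) [Fintype V] (c : V → Bool) (v : V) : ℕ :=
  ((G.neighborFinset v).filter fun u => c u ≠ c v).card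

/-- One round of the minority process. -/
noncomputable def minStep (G : SimpleGraph V) [Fintype V] (c : V → Bool) : V → Bool :=
  fun v => if sameCount G c v ≤ diffCount G c v then c v else !c v

/-- One round of the majority process. -/
noncomputable def majStep (G : SimpleGraph V) [Fintype V] (c : V → Bool) : V → Bool :=
  fun v => if diffCount G c v ≤ sameCount G c v then c v else !c v

/-- Number of edges of `F` incident to `v`. -/
noncomputable def incCount (F : Finset (Sym2 V)) (v : V) : ℕ :=
  (F.filter fun e => v ∈ e).card

/-- The monochromatic edges of a coloring. -/
noncomputable def monoEdges (G : SimpleGraph V) [Fintype V] (c : V → Bool) : Finset (Sym2 V) :=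
  G.edgeFinset.filter fun e => ∀ x ∈ e, ∀ y ∈ e, c x = c y

/-- The multichromatic edges of a coloring. -/
noncomputable def multiEdges (G : SimpleGraph V) [Fintype V] (c : V → Bool) : Finset (Sym2 V) :=
  G.edgeFinset.filter fun e => ∃ x ∈ e, ∃ y ∈ e, c x ≠ c y

lemma count_sum [Fintype V] (G : SimpleGraph V) (c : V → Bool) (v : V) :
    sameCount G c v + diffCount G c v = G.degree v := by
  rw [sameCount, diffCount, Finset.card_filter_add_card_filter_not,
    ← card_neighborFinset_eq_degree]

lemma fix_iff [Fintype V] (G : SimpleGraph V) (c : V → Bool) :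
    majStep G c = c ↔ ∀ v, diffCount G c v ≤ sameCount G c v := by
  constructor
  · intro h v
    by_contra hn
    have := congrFun h v
    simp [majStep, hn] at this
  · intro h
    funext v
    simp [majStep, h v]

lemma walk_const {G : SimpleGraph V} {c : V → Bool} (hadj : ∀ a b, G.Adj a b → c a = c b)
    {x y : V} (p : G.Walk x y) : c x = c y := by
  induction p with
  | nil => rfl
  | cons h _ ih => exact (hadj _ _ h).trans ih

lemma helper [Fintype V] (G : SimpleGraph V) (c : V → Bool) (v o : V)
    (ho : ∀ x ∈ G.neighborFinset v, x ≠ o → c x = c v)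
    (hx : ∃ x ∈ G.neighborFinset v, x ≠ o) :
    diffCount G c v ≤ sameCount G c v := by
  obtain ⟨x, hxm, hxo⟩ := hx
  have h1 : 1 ≤ sameCount G c v :=
    Finset.card_pos.mpr ⟨x, Finset.mem_filter.mpr ⟨hxm, ho x hxm hxo⟩⟩
  have h2 : diffCount G c v ≤ 1 := by
    have hsub : ((G.neighborFinset v).filter fun u => c u ≠ c v) ⊆ {o} := by
      intro y hy
      rw [Finset.mem_filter] at hy
      simp only [Finset.mem_singleton]
      by_contra hyo
      exact hy.2 (ho y hy.1 hyo)
    simpa [diffCount] using Finset.card_le_card hsub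
  exact h2.trans h1

lemma exists_fix [Fintype V] {G : SimpleGraph V} (hA : G.IsAcyclic) {a b : V}
    (hab : G.Adj a b) (ha : 2 ≤ G.degree a) (hb : 2 ≤ G.degree b) :
    ∃ c : V → Bool, majStep G c = c ∧ ¬ (∀ u w : V, c u = c w) := by
  set H := G.deleteEdges {s(a, b)} with hH
  set c : V → Bool := fun v => decide (H.Reachable b v) with hc
  have hbr : ¬ H.Reachable a b :=
    ((isAcyclic_iff_forall_adj_isBridge.mp hA) hab)
  have hca : c a = false := by
    simp only [hc, decide_eq_false_iff_not]
    exact fun h => hbr h.symm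
  have hcb : c b = true := by
    simp only [hc, decide_eq_true_eq]
    exact Reachable.refl b
  have hadjH : ∀ v x, G.Adj v x → s(v, x) ≠ s(a, b) → c x = c v := by
    intro v x hvx hne
    have hH' : H.Adj v x := by
      rw [hH, deleteEdges_adj]
      exact ⟨hvx, by simpa using hne⟩
    simp only [hc, decide_eq_decide]
    exact ⟨fun r => r.trans hH'.symm.reachable, fun r => r.trans hH'.reachable⟩
  refine ⟨c, (fix_iff G c).mpr ?_, fun hall => by
    have := hall a b; rw [hca, hcb] at this; exact absurd this (by simp)⟩
  intro v
  by_cases hva : v = a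
  · subst hva
    refine helper G c v b (fun x hx hxb => ?_) ?_
    · refine hadjH v x (by rwa [← mem_neighborFinset]) ?_
      simp only [ne_eq, Sym2.eq_iff]
      push_neg
      exact ⟨fun _ => hxb, fun h => absurd h hab.ne⟩
    · have : 1 < (G.neighborFinset v).card := by
        rwa [card_neighborFinset_eq_degree]
      obtain ⟨x, hx, hxb⟩ := Finset.exists_mem_ne this b
      exact ⟨x, hx, hxb⟩
  · by_cases hvb : v = b
    · subst hvb
      refine helper G c v a (fun x hx hxa => ?_) ?_
      · refine hadjH v x (by rwa [← mem_neighborFinset]) ?_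
        simp only [ne_eq, Sym2.eq_iff]
        push_neg
        exact ⟨fun h => absurd h.symm hab.ne, fun _ => hxa⟩
      · have : 1 < (G.neighborFinset v).card := by
          rwa [card_neighborFinset_eq_degree]
        obtain ⟨x, hx, hxa⟩ := Finset.exists_mem_ne this a
        exact ⟨x, hx, hxa⟩
    · have : diffCount G c v = 0 := by
        rw [diffCount, Finset.card_eq_zero, Finset.filter_eq_empty_iff]
        intro x hx
        simp only [ne_eq, not_not]
        refine hadjH v x (by rwa [← mem_neighborFinset]) ?_
        simp only [ne_eq, Sym2.eq_iff]
        push_neg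
        exact ⟨fun h => absurd h hva, fun h => absurd h hvb⟩
      omega

theorem stmt6 [Fintype V] (G : SimpleGraph V) (hT : G.IsTree) :
    (∃ c : V → Bool, majStep G c = c ∧ ∀ u w : V, c u = c w) ∧
    ((∃ c : V → Bool, majStep G c = c ∧ ¬ (∀ u w : V, c u = c w)) ↔
      ∃ u w : V, u ≠ w ∧ 2 ≤ G.degree u ∧ 2 ≤ G.degree w) := by
  constructor
  · refine ⟨fun _ => true, (fix_iff G _).mpr fun v => ?_, fun _ _ => rfl⟩
    have : diffCount G (fun _ => true) v = 0 := by
      rw [diffCount, Finset.card_eq_zero, Finset.filter_eq_empty_iff]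
      intro x _
      simp
    omega
  constructor
  · rintro ⟨c, hfix, hnc⟩
    have hne : ¬ ∀ a b, G.Adj a b → c a = c b := fun h =>
      hnc fun u w => walk_const h (hT.isConnected.preconnected u w).some
    push_neg at hne
    obtain ⟨x, y, hxy, hcxy⟩ := hne
    have hfix' := (fix_iff G c).mp hfix
    have hdx : 1 ≤ diffCount G c x :=
      Finset.card_pos.mpr ⟨y, Finset.mem_filter.mpr ⟨(mem_neighborFinset G x y).mpr hxy,
        fun h => hcxy h.symm⟩⟩
    have hdy : 1 ≤ diffCount G c y :=
      Finset.card_pos.mpr ⟨x, Finset.mem_filter.mpr ⟨(mem_neighborFinset G y x).mpr hxy.symm,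
        fun h => hcxy h⟩⟩
    have h1 := count_sum G c x
    have h2 := count_sum G c y
    have hsx := hfix' x
    have hsy := hfix' y
    exact ⟨x, y, hxy.ne, by omega, by omega⟩
  · rintro ⟨u, w, hne, hu, hw⟩
    have pw : G.Walk u w := (hT.isConnected.preconnected u w).some
    obtain ⟨p, hp⟩ := pw.toPath
    cases p with
    | nil => exact absurd rfl hne
    | cons h q =>
      rename_i b
      rw [Walk.cons_isPath_iff] at hp
      have hdb : 2 ≤ G.degree b := by
        cases q with
        | nil => exact hw
        | cons h2 q2 =>
          rename_i b2
          rw [← card_neighborFinset_eq_degree]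
          refine Finset.one_lt_card.mpr ⟨u, ?_, b2, ?_, ?_⟩
          · simpa using h.symm
          · simpa using h2
          · intro hub2
            apply hp.2
            rw [hub2, Walk.support_cons]
            exact List.mem_cons_of_mem _ (Walk.start_mem_support q2)
      exact exists_fix hT.IsAcyclic h hu hdb
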